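/- arXiv:1509.00231 — 2 statements merged into one kernel-verified Lean document; each statement's English description precedes it below -/
import Mathlib

section
/- Let t ≥ 0 and let W be a real-valued F_{t+1}-measurable random variable such that E[W | F_t] = 0 a.s. Then there exists an ℝ^N-valued F_t-measurable random variable Z_t such that W = Z_tᵀM_{t+1} a.s., and this Z_t is unique up to the equivalence ∼_{M_{t+1}}. -/
open MeasureTheory Finset Filter

noncomputable section

namespace DiscreteEBSDE

variable {Ω : Type*} {mΩ : MeasurableSpace Ω} {N : ℕ}

/-- The standard basis vector `e i` of `ℝ^N`. -/
def e (N : ℕ) (i : Fin N) : Fin N → ℝ := Pi.single i 1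

/-- The Euclidean inner product on `ℝ^N`. -/
def dotR {N : ℕ} (z w : Fin N → ℝ) : ℝ := ∑ i, z i * w i

/-- The process `X` takes values in the standard basis of `ℝ^N`. -/
def BasisValued (X : ℕ → Ω → (Fin N → ℝ)) : Prop := ∀ t ω, ∃ i, X t ω = e N i

/-- The σ-algebra generated by `X 0, …, X t`. -/
def natSigma (X : ℕ → Ω → (Fin N → ℝ)) (t : ℕ) : MeasurableSpace Ω :=
  ⨆ s ∈ Set.Iic t, MeasurableSpace.comap (X s) inferInstance

/-- `F` is the `P`-completion of the natural filtration of `X`: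
a set is `F t`-measurable iff it agrees with a set of the natural σ-algebra up to a
`P`-null symmetric difference. -/
def IsCompletedNaturalFiltration (P : Measure Ω) (X : ℕ → Ω → (Fin N → ℝ))
    (F : Filtration ℕ mΩ) : Prop :=
  ∀ (t : ℕ) (A : Set Ω), MeasurableSet[F t] A ↔
    ∃ B : Set Ω, MeasurableSet[natSigma X t] B ∧ P (symmDiff A B) = 0

/-- The martingale difference `M (t+1) = X (t+1) - E[X (t+1) | F t]` (componentwise). -/
def Mdiff (P : Measure Ω) (F : Filtration ℕ mΩ) (X : ℕ → Ω → (Fin N → ℝ)) (t : ℕ)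
    (ω : Ω) : Fin N → ℝ :=
  fun i => X (t + 1) ω i - (P[(fun ω' => X (t + 1) ω' i)|F t]) ω

/-- The conditional second moment `‖Z‖²_{M_{t+1}} = E[(Zᵀ M_{t+1})² | F t]`. -/
def seminormSq (P : Measure Ω) (F : Filtration ℕ mΩ) (X : ℕ → Ω → (Fin N → ℝ))
    (t : ℕ) (Z : Ω → Fin N → ℝ) : Ω → ℝ :=
  P[(fun ω => (dotR (Z ω) (Mdiff P F X t ω)) ^ 2)|F t]

/-- The stochastic seminorm `‖Z‖_{M_{t+1}}`. -/
def mSeminorm (P : Measure Ω) (F : Filtration ℕ mΩ) (X : ℕ → Ω → (Fin N → ℝ))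
    (t : ℕ) (Z : Ω → Fin N → ℝ) (ω : Ω) : ℝ :=
  Real.sqrt (seminormSq P F X t Z ω)

/-- `Z ∼_{M_{t+1}} Z'`, i.e. `‖Z - Z'‖_{M_{t+1}} = 0` a.s. -/
def equivMt (P : Measure Ω) (F : Filtration ℕ mΩ) (X : ℕ → Ω → (Fin N → ℝ)) (t : ℕ)
    (Z Z' : Ω → Fin N → ℝ) : Prop :=
  seminormSq P F X t (fun ω => Z ω - Z' ω) =ᵐ[P] 0

/-- `Z ∼_M Z'`. -/
def equivM (P : Measure Ω) (F : Filtration ℕ mΩ) (X : ℕ → Ω → (Fin N → ℝ))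
    (Z Z' : ℕ → Ω → Fin N → ℝ) : Prop :=
  ∀ t, equivMt P F X t (Z t) (Z' t)

/-- A driver `f(ω,t,y,z)` is adapted if `(ω,y,z) ↦ f(ω,t,y,z)` is
`F t ⊗ B(ℝ) ⊗ B(ℝ^N)`-measurable for every `t`. -/
def DriverAdapted (F : Filtration ℕ mΩ) (f : Ω → ℕ → ℝ → (Fin N → ℝ) → ℝ) : Prop :=
  ∀ t : ℕ, Measurable[(F t).prod inferInstance]
    fun p : Ω × (ℝ × (Fin N → ℝ)) => f p.1 t p.2.1 p.2.2

/-- A column-stochastic transition matrix. -/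
def IsTransMat {n : ℕ} (A : Matrix (Fin n) (Fin n) ℝ) : Prop :=
  (∀ i j, 0 ≤ A i j) ∧ ∀ j, ∑ i, A i j = 1

/-- `X` is a Markov chain with transition matrices `A t`; since `X` is valued in the
standard basis this is equivalent to `E[X (t+1) | F t] = (A t) (X t)` a.s. -/
def IsMarkovChain (P : Measure Ω) (F : Filtration ℕ mΩ) (X : ℕ → Ω → (Fin N → ℝ))
    (A : ℕ → Matrix (Fin N) (Fin N) ℝ) : Prop :=
  (∀ t, IsTransMat (A t)) ∧
    ∀ (t : ℕ) (i : Fin N),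
      (P[(fun ω => X (t + 1) ω i)|F t]) =ᵐ[P] fun ω => (A t).mulVec (X t ω) i

/-- The atom of `F t` containing `ω₀` (the set of paths agreeing with `ω₀` up to time `t`). -/
def pathAtom (X : ℕ → Ω → (Fin N → ℝ)) (t : ℕ) (ω₀ : Ω) : Set Ω :=
  {ω' | ∀ s ≤ t, X s ω' = X s ω₀}

/-- `min_{i ∈ J_t^F} (z - z')ᵀ(e_i - E[X_{t+1} | F_t])` where `F` is the atom of `ω₀`
 at time `t` and `J_t^F = {i : P(X_{t+1} = e_i | F) > 0}`. -/
def minJump (P : Measure Ω) (F : Filtration ℕ mΩ) (X : ℕ → Ω → (Fin N → ℝ))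
    (t : ℕ) (ω₀ : Ω) (z z' : Fin N → ℝ) (ω : Ω) : ℝ :=
  sInf {r : ℝ | ∃ i : Fin N,
    0 < P ({ω' | X (t + 1) ω' = e N i} ∩ pathAtom X t ω₀) ∧
    r = dotR (z - z') (fun j => e N i j - (P[(fun ω'' => X (t + 1) ω'' j)|F t]) ω)}

/-- The comparison condition of the change-of-measure proposition: on every atom `F` of
`F t`, `f(ω,t,y,z) - f(ω,t,y,z') > min_{i ∈ J_t^F}{(z-z')ᵀ(e_i - E[X_{t+1}|F_t])}`, unless
this minimum is `0`, in which case equality holds. -/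
def ComparisonCondition (P : Measure Ω) (F : Filtration ℕ mΩ) (X : ℕ → Ω → (Fin N → ℝ))
    (f : Ω → ℕ → ℝ → (Fin N → ℝ) → ℝ) : Prop :=
  ∀ (t : ℕ) (y : ℝ) (z z' : Fin N → ℝ) (ω₀ : Ω), 0 < P (pathAtom X t ω₀) →
    ∀ᵐ ω ∂P, ω ∈ pathAtom X t ω₀ →
      (minJump P F X t ω₀ z z' ω = 0 → f ω t y z - f ω t y z' = 0) ∧
      (minJump P F X t ω₀ z z' ω ≠ 0 →
        minJump P F X t ω₀ z z' ω < f ω t y z - f ω t y z')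

/-- `f` is Lipschitz in `z` with constant `L`, w.r.t. the stochastic seminorm. -/
def DriverLipschitzNoY (P : Measure Ω) (F : Filtration ℕ mΩ) (X : ℕ → Ω → (Fin N → ℝ))
    (L : ℝ) (f : Ω → ℕ → (Fin N → ℝ) → ℝ) : Prop :=
  ∀ (t : ℕ) (Zt Z't : Ω → Fin N → ℝ),
    StronglyMeasurable[F t] Zt → StronglyMeasurable[F t] Z't →
    ∀ᵐ ω ∂P, |f ω t (Zt ω) - f ω t (Z't ω)| ≤
      L * mSeminorm P F X t (fun ω' => Zt ω' - Z't ω') ω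

/-- `(Y,Z)` is an adapted solution of the finite horizon BSDE with driver `f`,
horizon `T` and terminal condition `ξ`. -/
def SolvesFiniteBSDE (P : Measure Ω) (F : Filtration ℕ mΩ) (X : ℕ → Ω → (Fin N → ℝ))
    (f : Ω → ℕ → ℝ → (Fin N → ℝ) → ℝ) (T : ℕ) (ξ : Ω → ℝ)
    (Y : ℕ → Ω → ℝ) (Z : ℕ → Ω → Fin N → ℝ) : Prop :=
  Adapted F Y ∧ Adapted F Z ∧
    ∀ t ≤ T, ∀ᵐ ω ∂P,
      Y t ω - ∑ u ∈ Finset.Ico t T, f ω u (Y u ω) (Z u ω) +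
        ∑ u ∈ Finset.Ico t T, dotR (Z u ω) (Mdiff P F X u ω) = ξ ω

/-- `(Y,Z)` is an adapted solution of the infinite-horizon discounted BSDE
with discount rate `α` and driver `f` (independent of `y`). -/
def SolvesDiscountedBSDE (P : Measure Ω) (F : Filtration ℕ mΩ) (X : ℕ → Ω → (Fin N → ℝ))
    (α : ℝ) (f : Ω → ℕ → (Fin N → ℝ) → ℝ)
    (Y : ℕ → Ω → ℝ) (Z : ℕ → Ω → Fin N → ℝ) : Prop :=
  Adapted F Y ∧ Adapted F Z ∧
    ∀ t T : ℕ, t < T → ∀ᵐ ω ∂P,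
      Y T ω = Y t ω - ∑ u ∈ Finset.Ico t T, (f ω u (Z u ω) - α * Y u ω) +
        ∑ u ∈ Finset.Ico t T, dotR (Z u ω) (Mdiff P F X u ω)

/-- `(Y,Z,lam)` solves the Ergodic BSDE with Markovian driver `f`. -/
def SolvesEBSDE (P : Measure Ω) (F : Filtration ℕ mΩ) (X : ℕ → Ω → (Fin N → ℝ))
    (f : (Fin N → ℝ) → (Fin N → ℝ) → ℝ) (Y : ℕ → Ω → ℝ) (Z : ℕ → Ω → Fin N → ℝ)
    (lam : ℝ) : Prop :=
  ∀ t T : ℕ, t < T → ∀ᵐ ω ∂P,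
    Y T ω = Y t ω - ∑ u ∈ Finset.Ico t T, (f (X u ω) (Z u ω) - lam) +
      ∑ u ∈ Finset.Ico t T, dotR (Z u ω) (Mdiff P F X u ω)

/-- Ratio with the convention `0/0 := 1`. -/
def balRatio (a b : ℝ) : ℝ := if a = 0 ∧ b = 0 then 1 else a / b

/-- The driver `f(ω,t,y,z)` is `γ`-balanced. -/
def IsGammaBalanced (P : Measure Ω) (F : Filtration ℕ mΩ) (X : ℕ → Ω → (Fin N → ℝ))
    (A : ℕ → Matrix (Fin N) (Fin N) ℝ) (γ : ℝ)
    (f : Ω → ℕ → ℝ → (Fin N → ℝ) → ℝ) : Prop :=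
  ∃ ψ : Ω → ℕ → (Fin N → ℝ) → (Fin N → ℝ) → (Fin N → ℝ),
    (∀ t : ℕ, Measurable[(F t).prod inferInstance]
      fun p : Ω × ((Fin N → ℝ) × (Fin N → ℝ)) => ψ p.1 t p.2.1 p.2.2) ∧
    ∀ (t : ℕ) (y : ℝ) (z z' : Fin N → ℝ), ∀ᵐ ω ∂P,
      f ω t y z - f ω t y z' =
          dotR (z - z') (fun i => ψ ω t z z' i - (A t).mulVec (X t ω) i) ∧
        (∀ i, balRatio (ψ ω t z z' i) ((A t).mulVec (X t ω) i) ∈ Set.Icc γ γ⁻¹) ∧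
        ∑ i, ψ ω t z z' i = 1

/-- The driver `f(ω,t,z)` (independent of `y`) is `γ`-balanced. -/
def IsGammaBalancedNoY (P : Measure Ω) (F : Filtration ℕ mΩ) (X : ℕ → Ω → (Fin N → ℝ))
    (A : ℕ → Matrix (Fin N) (Fin N) ℝ) (γ : ℝ)
    (f : Ω → ℕ → (Fin N → ℝ) → ℝ) : Prop :=
  ∃ ψ : Ω → ℕ → (Fin N → ℝ) → (Fin N → ℝ) → (Fin N → ℝ),
    (∀ t : ℕ, Measurable[(F t).prod inferInstance]
      fun p : Ω × ((Fin N → ℝ) × (Fin N → ℝ)) => ψ p.1 t p.2.1 p.2.2) ∧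
    ∀ (t : ℕ) (z z' : Fin N → ℝ), ∀ᵐ ω ∂P,
      f ω t z - f ω t z' =
          dotR (z - z') (fun i => ψ ω t z z' i - (A t).mulVec (X t ω) i) ∧
        (∀ i, balRatio (ψ ω t z z' i) ((A t).mulVec (X t ω) i) ∈ Set.Icc γ γ⁻¹) ∧
        ∑ i, ψ ω t z z' i = 1

/-- A probability vector on `Fin n`. -/
def IsProbVec {n : ℕ} (μ : Fin n → ℝ) : Prop := (∀ i, 0 ≤ μ i) ∧ ∑ i, μ i = 1

/-- Total variation distance between (signed) measures on a finite state space. -/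
def tvDist {n : ℕ} (μ ν : Fin n → ℝ) : ℝ := (∑ x, |μ x - ν x|) / 2

/-- Uniform ergodicity of the chain induced by the column-stochastic matrix `A`. -/
def UniformlyErgodic {n : ℕ} (A : Matrix (Fin n) (Fin n) ℝ) : Prop :=
  ∃ π : Fin n → ℝ, IsProbVec π ∧ ∃ R ρ : ℝ, 0 < R ∧ 0 < ρ ∧
    ∀ (t : ℕ) (μ : Fin n → ℝ), IsProbVec μ →
      tvDist ((A ^ t).mulVec μ) π ≤ R * Real.exp (-ρ * t)

lemma e_injective {N : ℕ} : Function.Injective (e N) := by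
  intro i j h
  by_contra hne
  have : (1:ℝ) = (Pi.single j 1 : Fin N → ℝ) i := by
    have h' := congrFun h i
    simpa [e, Pi.single_eq_same] using h'
  rw [Pi.single_eq_of_ne hne] at this
  exact one_ne_zero this

/-- the path of `ω` up to time `T`. -/
def path (X : ℕ → Ω → (Fin N → ℝ)) (hX : BasisValued X) (T : ℕ) (ω : Ω) :
    Fin (T + 1) → Fin N := fun s => (hX s ω).choose

lemma X_eq_path (X : ℕ → Ω → (Fin N → ℝ)) (hX : BasisValued X) (T : ℕ) (ω : Ω)
    (s : Fin (T + 1)) : X s ω = e N (path X hX T ω s) := (hX s ω).choose_spec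

lemma path_eq_iff (X : ℕ → Ω → (Fin N → ℝ)) (hX : BasisValued X) (T : ℕ) (ω : Ω)
    (s : Fin (T + 1)) (i : Fin N) : path X hX T ω s = i ↔ X s ω = e N i := by
  constructor
  · rintro rfl; exact X_eq_path X hX T ω s
  · intro h; exact e_injective ((X_eq_path X hX T ω s).symm.trans h)

lemma comap_le_natSigma (X : ℕ → Ω → (Fin N → ℝ)) {s T : ℕ} (hs : s ≤ T) :
    MeasurableSpace.comap (X s) inferInstance ≤ natSigma X T := by
  have : MeasurableSpace.comap (X s) inferInstance ≤
      ⨆ u ∈ Set.Iic T, MeasurableSpace.comap (X u) inferInstance :=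
    le_iSup₂ (f := fun u _ => MeasurableSpace.comap (X u) inferInstance) s (Set.mem_Iic.2 hs)
  exact this

lemma path_measurable (X : ℕ → Ω → (Fin N → ℝ)) (hX : BasisValued X) (T : ℕ) :
    Measurable[natSigma X T] (path X hX T) := by
  letI := natSigma X T
  refine measurable_pi_lambda _ fun s => measurable_to_countable' fun i => ?_
  have : (fun ω => path X hX T ω s) ⁻¹' {i} = X s ⁻¹' {e N i} := by
    ext ω; simp [path_eq_iff X hX T ω s i]
  rw [this]
  exact comap_le_natSigma X (Nat.lt_succ_iff.mp s.isLt) _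
    ⟨{e N i}, measurableSet_singleton _, rfl⟩

lemma natSigma_le_comap (X : ℕ → Ω → (Fin N → ℝ)) (hX : BasisValued X) (T : ℕ) :
    natSigma X T ≤ MeasurableSpace.comap (path X hX T) ⊤ := by
  refine iSup₂_le fun s hs => ?_
  rintro A ⟨C, -, rfl⟩
  refine ⟨(fun p => e N (p ⟨s, Nat.lt_succ_of_le hs⟩)) ⁻¹' C, trivial, ?_⟩
  ext ω
  simp only [Set.mem_preimage]
  rw [← X_eq_path X hX T ω ⟨s, Nat.lt_succ_of_le hs⟩]

lemma exists_preimage (X : ℕ → Ω → (Fin N → ℝ)) (hX : BasisValued X) (T : ℕ)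
    {B : Set Ω} (hB : MeasurableSet[natSigma X T] B) :
    ∃ S : Set (Fin (T + 1) → Fin N), B = path X hX T ⁻¹' S := by
  obtain ⟨S, -, hS⟩ := natSigma_le_comap X hX T B hB
  exact ⟨S, hS.symm⟩

lemma sInf_rat_gt (r : ℝ) :
    sInf {x : ℝ | ∃ q : ℚ, r < (q : ℝ) ∧ (q : ℝ) = x} = r := by
  set S : Set ℝ := {x : ℝ | ∃ q : ℚ, r < (q : ℝ) ∧ (q : ℝ) = x}
  have hne : S.Nonempty := by
    obtain ⟨q, hq⟩ := exists_rat_gt r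
    exact ⟨q, q, hq, rfl⟩
  have hbd : ∀ x ∈ S, r ≤ x := by rintro x ⟨q, hq, rfl⟩; exact hq.le
  refine le_antisymm ?_ (le_csInf hne hbd)
  by_contra h
  push_neg at h
  obtain ⟨q, hq1, hq2⟩ := exists_rat_btwn h
  exact absurd (csInf_le ⟨r, hbd⟩ ⟨q, hq1, rfl⟩) (not_le.2 hq2)

/-- Every `F T`-measurable real function is a.e. a function of the path up to `T`. -/
lemma ae_eq_comp_path (P : Measure Ω) (F : Filtration ℕ mΩ)
    (X : ℕ → Ω → (Fin N → ℝ)) (hX : BasisValued X)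
    (hF : IsCompletedNaturalFiltration P X F) (T : ℕ)
    {g : Ω → ℝ} (hg : Measurable[F T] g) :
    ∃ G : (Fin (T + 1) → Fin N) → ℝ, g =ᵐ[P] fun ω => G (path X hX T ω) := by
  have hD : ∀ q : ℚ, MeasurableSet[F T] {ω | g ω < (q : ℝ)} := fun q =>
    measurableSet_lt hg measurable_const
  choose B hBmeas hBnull using fun q : ℚ => (hF T {ω | g ω < (q : ℝ)}).1 (hD q)
  choose S hS using fun q : ℚ => exists_preimage X hX T (hBmeas q)
  refine ⟨fun p => sInf {x : ℝ | ∃ q : ℚ, p ∈ S q ∧ (q : ℝ) = x}, ?_⟩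
  have hae : ∀ᵐ ω ∂P, ∀ q : ℚ, g ω < (q : ℝ) ↔ path X hX T ω ∈ S q := by
    rw [ae_all_iff]
    intro q
    have hnull := hBnull q
    rw [hS q] at hnull
    have hset : {ω | ¬(g ω < (q : ℝ) ↔ path X hX T ω ∈ S q)} =
        symmDiff {ω | g ω < (q : ℝ)} (path X hX T ⁻¹' S q) := by
      ext ω
      simp only [Set.mem_setOf_eq, Set.mem_symmDiff, Set.mem_preimage]
      tauto
    rw [ae_iff]
    simpa [hset] using hnull
  filter_upwards [hae] with ω hω
  have : {x : ℝ | ∃ q : ℚ, path X hX T ω ∈ S q ∧ (q : ℝ) = x} =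
      {x : ℝ | ∃ q : ℚ, g ω < (q : ℝ) ∧ (q : ℝ) = x} := by
    ext x
    constructor
    · rintro ⟨q, hq, rfl⟩; exact ⟨q, (hω q).2 hq, rfl⟩
    · rintro ⟨q, hq, rfl⟩; exact ⟨q, (hω q).1 hq, rfl⟩
  simp only [this, sInf_rat_gt]


lemma natSigma_le_F (P : Measure Ω) (X : ℕ → Ω → (Fin N → ℝ)) (F : Filtration ℕ mΩ)
    (hF : IsCompletedNaturalFiltration P X F) (t : ℕ) :
    natSigma X t ≤ F t := fun A hA =>
  (hF t A).2 ⟨A, hA, by rw [symmDiff_self]; simp⟩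

lemma path_snoc (X : ℕ → Ω → (Fin N → ℝ)) (hX : BasisValued X) (t : ℕ) (ω : Ω) :
    path X hX (t + 1) ω =
      Fin.snoc (path X hX t ω) (path X hX (t + 1) ω (Fin.last (t + 1))) := by
  funext s
  refine Fin.lastCases ?_ ?_ s
  · rw [Fin.snoc_last]
  · intro j
    rw [Fin.snoc_castSucc, path_eq_iff]
    have h : ((Fin.castSucc j : Fin (t + 2)) : ℕ) = (j : ℕ) := Fin.coe_castSucc j
    rw [h]
    exact X_eq_path X hX t ω j

lemma sum_mul_e {N : ℕ} (c : Fin N → ℝ) (j : Fin N) : ∑ i, c i * e N j i = c j := by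
  rw [Finset.sum_eq_single j]
  · simp [e, Pi.single_eq_same]
  · intro i _ hij
    simp [e, Pi.single_eq_of_ne hij]
  · simp


/-- **One-step martingale representation.** If `W` is `F (t+1)`-measurable with
`E[W | F t] = 0` a.s., then there is an `F t`-measurable `ℝ^N`-valued `Z` with
`W = Zᵀ M (t+1)` a.s., unique up to `∼_{M_{t+1}}`. -/
theorem one_step_representation
    {Ω : Type*} {mΩ : MeasurableSpace Ω} {N : ℕ}
    (P : Measure Ω) [IsProbabilityMeasure P] (F : Filtration ℕ mΩ)
    (X : ℕ → Ω → (Fin N → ℝ)) (hX : BasisValued X)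
    (hF : IsCompletedNaturalFiltration P X F)
    (t : ℕ) (W : Ω → ℝ) (hW : StronglyMeasurable[F (t + 1)] W)
    (hWcond : P[W|F t] =ᵐ[P] 0) :
    ∃ Z : Ω → Fin N → ℝ, StronglyMeasurable[F t] Z ∧
      (∀ᵐ ω ∂P, W ω = dotR (Z ω) (Mdiff P F X t ω)) ∧
      ∀ Z' : Ω → Fin N → ℝ, StronglyMeasurable[F t] Z' →
        (∀ᵐ ω ∂P, W ω = dotR (Z' ω) (Mdiff P F X t ω)) →
        equivMt P F X t Z Z' := by
  classical
  obtain ⟨G, hG⟩ := ae_eq_comp_path P F X hX hF (t + 1) hW.measurable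
  set π1 : Ω → Fin (t + 2) → Fin N := path X hX (t + 1) with hπ1def
  set π0 : Ω → Fin (t + 1) → Fin N := path X hX t with hπ0def
  set W' : Ω → ℝ := fun ω => G (π1 ω) with hW'def
  set Z : Ω → Fin N → ℝ := fun ω i => G (Fin.snoc (π0 ω) i) with hZdef
  -- measurability of Z
  have hπ0F : Measurable[F t] π0 := fun S hS =>
    natSigma_le_F P X F hF t _ (path_measurable X hX t hS)
  have hZmeasF : Measurable[F t] Z :=
    (measurable_of_countable
      (fun p : Fin (t + 1) → Fin N => fun i => G (Fin.snoc p i))).comp hπ0F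
  have hZsm : StronglyMeasurable[F t] Z := hZmeasF.stronglyMeasurable
  have hZism : ∀ i, StronglyMeasurable[F t] (fun ω => Z ω i) := fun i =>
    ((measurable_pi_apply i).comp hZmeasF).stronglyMeasurable
  -- measurability and integrability of the coordinates of X (t+1)
  have hπ1m : Measurable π1 := by
    intro S hS
    exact (F.le (t + 1)) _
      (natSigma_le_F P X F hF (t + 1) _ (path_measurable X hX (t + 1) hS))
  have hXim : ∀ i, Measurable (fun ω => X (t + 1) ω i) := by
    intro i
    have heq : (fun ω => X (t + 1) ω i) =
        fun ω => e N (π1 ω (Fin.last (t + 1))) i := by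
      funext ω
      have h := congrFun (X_eq_path X hX (t + 1) ω (Fin.last (t + 1))) i
      simpa [Fin.val_last] using h
    rw [heq]
    exact (measurable_of_countable
      (fun p : Fin (t + 2) → Fin N => e N (p (Fin.last (t + 1))) i)).comp hπ1m
  have hXbd : ∀ ω i, |X (t + 1) ω i| ≤ 1 := by
    intro ω i
    obtain ⟨j, hj⟩ := hX (t + 1) ω
    rw [hj]
    rcases eq_or_ne i j with rfl | hij
    · simp [e, Pi.single_eq_same]
    · simp [e, Pi.single_eq_of_ne hij]
  have hXint : ∀ i, Integrable (fun ω => X (t + 1) ω i) P := fun i =>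
    (integrable_const (1 : ℝ)).mono' (hXim i).aestronglyMeasurable
      (ae_of_all _ fun ω => by simpa using hXbd ω i)
  -- bound on G hence on Z
  set C : ℝ := ∑ p : Fin (t + 2) → Fin N, |G p| with hCdef
  have hGbd : ∀ p, |G p| ≤ C :=
    fun p => Finset.single_le_sum (f := fun p => |G p|) (fun _ _ => abs_nonneg _)
      (Finset.mem_univ p)
  have hZbd : ∀ ω i, |Z ω i| ≤ C := fun ω i => hGbd _
  have hmul_int : ∀ i ∈ Finset.univ,
      Integrable (fun ω => Z ω i * X (t + 1) ω i) P := by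
    intro i _
    refine (integrable_const C).mono'
      (((hZism i).mono (F.le t)).aestronglyMeasurable.mul
        (hXim i).aestronglyMeasurable) (ae_of_all _ fun ω => ?_)
    have h1 : |Z ω i * X (t + 1) ω i| = |Z ω i| * |X (t + 1) ω i| := abs_mul _ _
    calc ‖Z ω i * X (t + 1) ω i‖ = |Z ω i| * |X (t + 1) ω i| := h1
      _ ≤ C * 1 := mul_le_mul (hZbd ω i) (hXbd ω i) (abs_nonneg _)
          (le_trans (abs_nonneg _) (hZbd ω i))
      _ = C := mul_one C
  -- pointwise: ∑ i, Z ω i * X (t+1) ω i = W' ω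
  have hsum : ∀ ω, (∑ i, Z ω i * X (t + 1) ω i) = W' ω := by
    intro ω
    have hlast : X (t + 1) ω = e N (π1 ω (Fin.last (t + 1))) := by
      have h := X_eq_path X hX (t + 1) ω (Fin.last (t + 1))
      simpa [Fin.val_last] using h
    calc (∑ i, Z ω i * X (t + 1) ω i)
        = ∑ i, Z ω i * e N (π1 ω (Fin.last (t + 1))) i := by rw [hlast]
      _ = Z ω (π1 ω (Fin.last (t + 1))) := sum_mul_e _ _
      _ = G (Fin.snoc (π0 ω) (π1 ω (Fin.last (t + 1)))) := rfl
      _ = G (π1 ω) := by rw [← path_snoc X hX t ω]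
      _ = W' ω := rfl
  -- conditional expectation computation
  have h1 : P[fun ω => ∑ i, Z ω i * X (t + 1) ω i|F t]
      =ᵐ[P] ∑ i, P[fun ω => Z ω i * X (t + 1) ω i|F t] := by
    have hfun : (fun ω => ∑ i, Z ω i * X (t + 1) ω i) =
        ∑ i, (fun ω => Z ω i * X (t + 1) ω i) := by
      funext ω; simp
    rw [hfun]
    exact condExp_finsetSum hmul_int _
  have h2 : ∀ i, P[fun ω => Z ω i * X (t + 1) ω i|F t] =ᵐ[P]
      fun ω => Z ω i * (P[fun ω' => X (t + 1) ω' i|F t]) ω := by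
    intro i
    have := condExp_mul_of_stronglyMeasurable_left (μ := P) (hZism i)
      (by simpa [Pi.mul_def] using hmul_int i (Finset.mem_univ i)) (hXint i)
    simpa [Pi.mul_def] using this
  have h3 : (∑ i, P[fun ω => Z ω i * X (t + 1) ω i|F t]) =ᵐ[P]
      fun ω => ∑ i, Z ω i * (P[fun ω' => X (t + 1) ω' i|F t]) ω := by
    have hall : ∀ᵐ ω ∂P, ∀ i, (P[fun ω' => Z ω' i * X (t + 1) ω' i|F t]) ω =
        Z ω i * (P[fun ω' => X (t + 1) ω' i|F t]) ω := ae_all_iff.2 fun i => h2 i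
    filter_upwards [hall] with ω hω
    simp only [Finset.sum_apply]
    exact Finset.sum_congr rfl fun i _ => hω i
  have hW'cond : P[W'|F t] =ᵐ[P] 0 := (condExp_congr_ae hG).symm.trans hWcond
  have h4 : P[fun ω => ∑ i, Z ω i * X (t + 1) ω i|F t] =ᵐ[P] 0 :=
    (condExp_congr_ae (ae_of_all _ hsum)).trans hW'cond
  have h5 : ∀ᵐ ω ∂P, (∑ i, Z ω i * (P[fun ω' => X (t + 1) ω' i|F t]) ω) = 0 := by
    have := (h3.symm.trans h1.symm).trans h4
    filter_upwards [this] with ω hω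
    simpa using hω
  have hrep : ∀ᵐ ω ∂P, W ω = dotR (Z ω) (Mdiff P F X t ω) := by
    filter_upwards [hG, h5] with ω hωG hω5
    rw [hωG]
    show W' ω = dotR (Z ω) (Mdiff P F X t ω)
    have : dotR (Z ω) (Mdiff P F X t ω) =
        (∑ i, Z ω i * X (t + 1) ω i) -
          ∑ i, Z ω i * (P[fun ω' => X (t + 1) ω' i|F t]) ω := by
      simp only [dotR, Mdiff, mul_sub, Finset.sum_sub_distrib]
    rw [this, hsum ω, hω5, sub_zero]
  refine ⟨Z, hZsm, hrep, ?_⟩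
  intro Z' _ hZ'rep
  have h0 : (fun ω => (dotR (Z ω - Z' ω) (Mdiff P F X t ω)) ^ 2) =ᵐ[P]
      (0 : Ω → ℝ) := by
    filter_upwards [hrep, hZ'rep] with ω hA hB
    have hdiff : dotR (Z ω - Z' ω) (Mdiff P F X t ω) =
        dotR (Z ω) (Mdiff P F X t ω) - dotR (Z' ω) (Mdiff P F X t ω) := by
      simp only [dotR, Pi.sub_apply, sub_mul, Finset.sum_sub_distrib]
    simp [hdiff, ← hA, ← hB]
  show seminormSq P F X t (fun ω => Z ω - Z' ω) =ᵐ[P] 0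
  unfold seminormSq
  exact (condExp_congr_ae h0).trans (by rw [condExp_zero])

end DiscreteEBSDE
end
end

section
/- (Finite horizon existence and uniqueness) Fix an integer T > 0, an F_T-measurable real random variable ξ, and a driver f : Ω × {0,…,T−1} × ℝ × ℝ^N → ℝ satisfying: (i) for any adapted real process Y and any adapted ℝ^N-valued processes Z ∼_M Z', f(ω,t,Y_t,Z_t) = f(ω,t,Y_t,Z'_t) a.s. for all t; (ii) for any z ∈ ℝ^N, any t ∈ {0,…,T−1} and almost all ω, the map y ↦ y − f(ω,t,y,z) is a bijection ℝ → ℝ. Then there exists an adapted pair (Y,Z) of processes in ℝ × ℝ^N such that Y_t − Σ_{t≤u<T} f(ω,u,Y_u,Z_u) + Σ_{t≤u<T} Z_uᵀM_{u+1} = ξ holds a.s. for all t ∈ {0,…,T}; moreover this solution is unique up to indistinguishability for Y and up to ∼_M-equivalence for Z. -/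
open MeasureTheory Finset Filter

noncomputable section

namespace DiscreteEBSDE

variable {Ω : Type*} {mΩ : MeasurableSpace Ω} {N : ℕ}

attribute [local instance 10] Classical.propDecidable

/-- `g` depends only on the path up to time `t`. -/
def Inv {β : Type*} (X : ℕ → Ω → (Fin N → ℝ)) (t : ℕ) (g : Ω → β) : Prop :=
  ∀ ω ω', (∀ s ≤ t, X s ω' = X s ω) → g ω' = g ω

lemma e_inj {i j : Fin N} (h : e N i = e N j) : i = j := by
  by_contra hne
  have := congrFun h i
  simp [e, Pi.single_apply, hne] at this

lemma Inv.mono {β : Type*} {X : ℕ → Ω → (Fin N → ℝ)} {s t : ℕ} (hst : s ≤ t) {g : Ω → β}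
    (hg : Inv X s g) : Inv X t g :=
  fun ω ω' h => hg ω ω' fun u hu => h u (hu.trans hst)

lemma dotR_e (z : Fin N → ℝ) (j : Fin N) : dotR z (e N j) = z j := by
  simp [dotR, e, Pi.single_apply, mul_ite]

lemma Inv.factor {β : Type*} [Nonempty β] {X : ℕ → Ω → (Fin N → ℝ)}
    (idx : ℕ → Ω → Fin N) (hidx : ∀ s ω, X s ω = e N (idx s ω))
    {t : ℕ} {g : Ω → β} (hg : Inv X t g) :
    ∃ G : (Fin (t + 1) → Fin N) → β, ∀ ω, g ω = G (fun s => idx s ω) := by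
  classical
  refine ⟨fun q => if h : ∃ ω, ∀ s : Fin (t + 1), idx (s : ℕ) ω = q s then g h.choose
    else Classical.arbitrary β, fun ω => ?_⟩
  have h : ∃ ω'', ∀ s : Fin (t + 1), idx (s : ℕ) ω'' = idx (s : ℕ) ω := ⟨ω, fun _ => rfl⟩
  show g ω = dite _ _ _
  rw [dif_pos h]
  refine (hg ω h.choose fun s hs => ?_).symm
  have hs' : s < t + 1 := Nat.lt_succ_of_le hs
  have := h.choose_spec ⟨s, hs'⟩
  rw [hidx s h.choose, hidx s ω, this]


lemma measurable_X_natSigma {X : ℕ → Ω → (Fin N → ℝ)} {s t : ℕ} (hst : s ≤ t) :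
    Measurable[natSigma X t] (X s) := by
  intro S hS
  have : MeasurableSpace.comap (X s) inferInstance ≤ natSigma X t := by
    refine le_iSup₂_of_le s hst le_rfl
  exact this _ ⟨S, hS, rfl⟩

lemma Inv.measurable_natSigma {β : Type*} [MeasurableSpace β] [Nonempty β]
    {X : ℕ → Ω → (Fin N → ℝ)}
    (idx : ℕ → Ω → Fin N) (hidx : ∀ s ω, X s ω = e N (idx s ω))
    {t : ℕ} {g : Ω → β} (hg : Inv X t g) : Measurable[natSigma X t] g := by
  classical
  obtain ⟨G, hG⟩ := hg.factor idx hidx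
  intro S _
  have hset : g ⁻¹' S =
      ⋃ q ∈ {q : Fin (t + 1) → Fin N | G q ∈ S},
        ⋂ s : Fin (t + 1), X (s : ℕ) ⁻¹' {e N (q s)} := by
    ext ω
    simp only [Set.mem_preimage, Set.mem_iUnion, Set.mem_iInter, Set.mem_setOf_eq,
      Set.mem_singleton_iff]
    constructor
    · intro hω
      refine ⟨fun s => idx (s : ℕ) ω, ?_, fun s => hidx _ _⟩
      rw [hG ω] at hω; exact hω
    · rintro ⟨q, hq, hqs⟩
      have : (fun s : Fin (t + 1) => idx (s : ℕ) ω) = q := by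
        funext s
        exact e_inj ((hidx (s : ℕ) ω).symm.trans (hqs s))
      rw [hG ω, this]; exact hq
  rw [hset]
  refine MeasurableSet.biUnion (Set.to_countable _) fun q _ => ?_
  exact MeasurableSet.iInter fun s =>
    measurable_X_natSigma (Nat.lt_succ_iff.mp s.2) (measurableSet_singleton _)

lemma natSigma_le {P : Measure Ω} {X : ℕ → Ω → (Fin N → ℝ)} {F : Filtration ℕ mΩ}
    (hF : IsCompletedNaturalFiltration P X F) (t : ℕ) : natSigma X t ≤ F t := by
  intro A hA
  exact (hF t A).2 ⟨A, hA, by simp⟩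

lemma Inv.stronglyMeasurable {β : Type*} [MeasurableSpace β] [TopologicalSpace β]
    [Nonempty β] [TopologicalSpace.PseudoMetrizableSpace β] [BorelSpace β] [SecondCountableTopology β]
    {P : Measure Ω} {X : ℕ → Ω → (Fin N → ℝ)} {F : Filtration ℕ mΩ}
    (hF : IsCompletedNaturalFiltration P X F)
    (idx : ℕ → Ω → Fin N) (hidx : ∀ s ω, X s ω = e N (idx s ω))
    {t : ℕ} {g : Ω → β} (hg : Inv X t g) : StronglyMeasurable[F t] g :=
  ((hg.measurable_natSigma idx hidx).mono (natSigma_le hF t) le_rfl).stronglyMeasurable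

/-- Sets of the natural σ-algebra depend only on the path up to time `t`. -/
lemma natSigma_respects {X : ℕ → Ω → (Fin N → ℝ)} {t : ℕ} {A : Set Ω}
    (hA : MeasurableSet[natSigma X t] A) {ω ω' : Ω}
    (hpath : ∀ s ≤ t, X s ω' = X s ω) : ω ∈ A ↔ ω' ∈ A := by
  let m' : MeasurableSpace Ω :=
    { MeasurableSet' := fun A => ∀ ω ω', (∀ s ≤ t, X s ω' = X s ω) → (ω ∈ A ↔ ω' ∈ A)
      measurableSet_empty := fun _ _ _ => Iff.rfl
      measurableSet_compl := fun A hA ω ω' h => not_congr (hA ω ω' h)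
      measurableSet_iUnion := fun s hs ω ω' h => by
        simp only [Set.mem_iUnion]
        exact exists_congr fun i => hs i ω ω' h }
  have hle : natSigma X t ≤ m' := by
    refine iSup₂_le fun s hs => ?_
    rintro A ⟨S, _, rfl⟩
    intro ω ω' h
    simp only [Set.mem_preimage, h s hs]
  exact hle _ hA ω ω' hpath

/-- Sets of the product σ-algebra `natSigma ⊗ B` have path-dependent sections. -/
lemma natSigma_prod_respects {β : Type*} [mβ : MeasurableSpace β]
    {X : ℕ → Ω → (Fin N → ℝ)} {t : ℕ} {C : Set (Ω × β)}
    (hC : MeasurableSet[(natSigma X t).prod mβ] C) {ω ω' : Ω}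
    (hpath : ∀ s ≤ t, X s ω' = X s ω) (b : β) : (ω, b) ∈ C ↔ (ω', b) ∈ C := by
  let m' : MeasurableSpace (Ω × β) :=
    { MeasurableSet' := fun C => ∀ ω ω', (∀ s ≤ t, X s ω' = X s ω) →
        ∀ b, ((ω, b) ∈ C ↔ (ω', b) ∈ C)
      measurableSet_empty := fun _ _ _ _ => Iff.rfl
      measurableSet_compl := fun C hC ω ω' h b => not_congr (hC ω ω' h b)
      measurableSet_iUnion := fun s hs ω ω' h b => by
        simp only [Set.mem_iUnion]
        exact exists_congr fun i => hs i ω ω' h b }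
  have hle : (natSigma X t).prod mβ ≤ m' := by
    refine sup_le ?_ ?_
    · rintro C ⟨A, hA, rfl⟩
      intro ω ω' h b
      exact natSigma_respects hA h
    · rintro C ⟨S, _, rfl⟩
      intro ω ω' h b
      rfl
  exact hle _ hC ω ω' hpath b



lemma eq_of_forall_rat_lt_iff {x y : ℝ} (h : ∀ q : ℚ, ((q : ℝ) < x ↔ (q : ℝ) < y)) :
    x = y := by
  by_contra hne
  rcases lt_or_gt_of_ne hne with hlt | hlt
  · obtain ⟨q, hq1, hq2⟩ := exists_rat_btwn hlt
    exact absurd ((h q).2 hq2) (not_lt.2 hq1.le)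
  · obtain ⟨q, hq1, hq2⟩ := exists_rat_btwn hlt
    exact absurd ((h q).1 hq2) (not_lt.2 hq1.le)

lemma ae_nmem_of_null {P : Measure Ω} {E : Set Ω} (hE : P E = 0) : ∀ᵐ ω ∂P, ω ∉ E := by
  rw [ae_iff]
  simpa [Set.setOf_mem_eq] using hE

/-- An `F t`-strongly measurable function has a path-dependent a.e. version. -/
lemma exists_inv_ae {P : Measure Ω} {X : ℕ → Ω → (Fin N → ℝ)} {F : Filtration ℕ mΩ}
    (hF : IsCompletedNaturalFiltration P X F) {t : ℕ} {g : Ω → ℝ}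
    (hg : StronglyMeasurable[F t] g) :
    ∃ ghat : Ω → ℝ, Inv X t ghat ∧ ghat =ᵐ[P] g := by
  classical
  have hA : ∀ q : ℚ, MeasurableSet[F t] {ω | (q : ℝ) < g ω} := fun q =>
    hg.measurable measurableSet_Ioi
  choose B hB hBnull using fun q : ℚ => (hF t _).1 (hA q)
  set E : Set Ω := ⋃ q : ℚ, symmDiff {ω | (q : ℝ) < g ω} (B q) with hE
  have hEnull : P E = 0 := measure_iUnion_null fun q => hBnull q
  have key : ∀ ω ∉ E, ∀ q : ℚ, (ω ∈ B q ↔ (q : ℝ) < g ω) := by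
    intro ω hω q
    have : ω ∉ symmDiff {ω | (q : ℝ) < g ω} (B q) := fun h => hω (Set.mem_iUnion.2 ⟨q, h⟩)
    rw [Set.mem_symmDiff] at this
    push_neg at this
    exact ⟨this.2, this.1⟩
  have hconst : ∀ ω ω', ω ∉ E → ω' ∉ E → (∀ s ≤ t, X s ω' = X s ω) → g ω' = g ω := by
    intro ω ω' hω hω' hpath
    refine eq_of_forall_rat_lt_iff fun q => ?_
    rw [← key ω' hω' q, ← key ω hω q]
    exact (natSigma_respects (hB q) hpath).symm
  refine ⟨fun ω => if h : ∃ ω'', ω'' ∉ E ∧ ∀ s ≤ t, X s ω'' = X s ω then g h.choose else 0,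
    ?_, ?_⟩
  · intro ω ω' hpath
    have hpp : (fun ω'' => ω'' ∉ E ∧ ∀ s ≤ t, X s ω'' = X s ω') =
        (fun ω'' => ω'' ∉ E ∧ ∀ s ≤ t, X s ω'' = X s ω) := by
      funext ω''
      exact propext (and_congr_right fun _ => forall₂_congr fun s hs => by rw [hpath s hs])
    simp only [hpp]
  · filter_upwards [ae_nmem_of_null hEnull] with ω hω
    have h : ∃ ω'', ω'' ∉ E ∧ ∀ s ≤ t, X s ω'' = X s ω := ⟨ω, hω, fun _ _ => rfl⟩
    rw [dif_pos h]
    exact hconst ω h.choose hω h.choose_spec.1 h.choose_spec.2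

/-- Sets of `F t ⊗ B` have `natSigma ⊗ B` versions with a.e. equal sections. -/
lemma prod_completion_sets {β : Type*} {mβ : MeasurableSpace β}
    {P : Measure Ω} {X : ℕ → Ω → (Fin N → ℝ)} {F : Filtration ℕ mΩ}
    (hF : IsCompletedNaturalFiltration P X F) {t : ℕ} {C : Set (Ω × β)}
    (hC : MeasurableSet[(F t).prod mβ] C) :
    ∃ D : Set (Ω × β), MeasurableSet[(natSigma X t).prod mβ] D ∧
      ∀ᵐ ω ∂P, ∀ b, ((ω, b) ∈ C ↔ (ω, b) ∈ D) := by
  classical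
  let m' : MeasurableSpace (Ω × β) :=
    { MeasurableSet' := fun C => ∃ D : Set (Ω × β),
        MeasurableSet[(natSigma X t).prod mβ] D ∧
          ∀ᵐ ω ∂P, ∀ b, ((ω, b) ∈ C ↔ (ω, b) ∈ D)
      measurableSet_empty := ⟨∅, ((natSigma X t).prod mβ).measurableSet_empty, ae_of_all _ fun _ _ => Iff.rfl⟩
      measurableSet_compl := by
        rintro C ⟨D, hD, hae⟩
        exact ⟨Dᶜ, ((natSigma X t).prod mβ).measurableSet_compl D hD, hae.mono fun ω h b => not_congr (h b)⟩
      measurableSet_iUnion := by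
        intro u hu
        choose D hD hae using hu
        refine ⟨⋃ i, D i, ((natSigma X t).prod mβ).measurableSet_iUnion D hD, ?_⟩
        refine (ae_all_iff.2 hae).mono fun ω h b => ?_
        simp only [Set.mem_iUnion]
        exact exists_congr fun i => h i b }
  have hle : (F t).prod mβ ≤ m' := by
    refine sup_le ?_ ?_
    · rintro C ⟨A, hA, rfl⟩
      obtain ⟨B, hB, hnull⟩ := (hF t A).1 hA
      refine ⟨Prod.fst ⁻¹' B,
        (le_sup_left : MeasurableSpace.comap Prod.fst (natSigma X t) ≤
          (natSigma X t).prod mβ) _ ⟨B, hB, rfl⟩, ?_⟩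
      filter_upwards [ae_nmem_of_null hnull] with ω hω b
      rw [Set.mem_symmDiff] at hω
      push_neg at hω
      simp only [Set.mem_preimage]
      exact ⟨hω.1, hω.2⟩
    · rintro C ⟨S, hS, rfl⟩
      exact ⟨Prod.snd ⁻¹' S,
        (le_sup_right : MeasurableSpace.comap Prod.snd mβ ≤ (natSigma X t).prod mβ) _
          ⟨S, hS, rfl⟩, ae_of_all _ fun _ _ => Iff.rfl⟩
  exact hle _ hC

/-- The driver has a path-dependent a.e. version (uniformly in `(y,z)`). -/
lemma exists_drv_version {P : Measure Ω} {X : ℕ → Ω → (Fin N → ℝ)} {F : Filtration ℕ mΩ}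
    (hF : IsCompletedNaturalFiltration P X F) {f : Ω → ℕ → ℝ → (Fin N → ℝ) → ℝ}
    (hfAd : DriverAdapted F f) (t : ℕ) :
    ∃ ftil : Ω → ℝ → (Fin N → ℝ) → ℝ, (∀ y z, Inv X t (fun ω => ftil ω y z)) ∧
      ∀ᵐ ω ∂P, ∀ y z, ftil ω y z = f ω t y z := by
  classical
  have hC : ∀ q : ℚ, MeasurableSet[(F t).prod
      (inferInstance : MeasurableSpace (ℝ × (Fin N → ℝ)))]
      {p : Ω × (ℝ × (Fin N → ℝ)) | (q : ℝ) < f p.1 t p.2.1 p.2.2} := fun q =>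
    (hfAd t) measurableSet_Ioi
  choose D hD hDae using fun q : ℚ => prod_completion_sets hF (hC q)
  set E : Set Ω := ⋃ q : ℚ,
    {ω | ¬ ∀ b : ℝ × (Fin N → ℝ), ((ω, b) ∈
      {p : Ω × (ℝ × (Fin N → ℝ)) | (q : ℝ) < f p.1 t p.2.1 p.2.2} ↔ (ω, b) ∈ D q)} with hE
  have hEnull : P E = 0 := measure_iUnion_null fun q => by
    have := hDae q
    rw [ae_iff] at this
    exact this
  have key : ∀ ω ∉ E, ∀ (q : ℚ) (y : ℝ) (z : Fin N → ℝ),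
      ((ω, (y, z)) ∈ D q ↔ (q : ℝ) < f ω t y z) := by
    intro ω hω q y z
    have h : ∀ b : ℝ × (Fin N → ℝ), ((ω, b) ∈
        {p : Ω × (ℝ × (Fin N → ℝ)) | (q : ℝ) < f p.1 t p.2.1 p.2.2} ↔ (ω, b) ∈ D q) := by
      by_contra hc
      exact hω (Set.mem_iUnion.2 ⟨q, hc⟩)
    exact (h (y, z)).symm
  have hconst : ∀ ω ω', ω ∉ E → ω' ∉ E → (∀ s ≤ t, X s ω' = X s ω) →
      ∀ y z, f ω' t y z = f ω t y z := by
    intro ω ω' hω hω' hpath y z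
    refine eq_of_forall_rat_lt_iff fun q => ?_
    rw [← key ω' hω' q y z, ← key ω hω q y z]
    exact (natSigma_prod_respects (hD q) hpath (y, z)).symm
  refine ⟨fun ω y z => if h : ∃ ω'', ω'' ∉ E ∧ ∀ s ≤ t, X s ω'' = X s ω
    then f h.choose t y z else 0, ?_, ?_⟩
  · intro y z ω ω' hpath
    have hpp : (fun ω'' => ω'' ∉ E ∧ ∀ s ≤ t, X s ω'' = X s ω') =
        (fun ω'' => ω'' ∉ E ∧ ∀ s ≤ t, X s ω'' = X s ω) := by
      funext ω''
      exact propext (and_congr_right fun _ => forall₂_congr fun s hs => by rw [hpath s hs])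
    simp only [hpp]
  · filter_upwards [ae_nmem_of_null hEnull] with ω hω y z
    have h : ∃ ω'', ω'' ∉ E ∧ ∀ s ≤ t, X s ω'' = X s ω := ⟨ω, hω, fun _ _ => rfl⟩
    rw [dif_pos h]
    exact hconst ω h.choose hω h.choose_spec.1 h.choose_spec.2 y z

lemma Inv.bounded {X : ℕ → Ω → (Fin N → ℝ)}
    (idx : ℕ → Ω → Fin N) (hidx : ∀ s ω, X s ω = e N (idx s ω))
    {t : ℕ} {g : Ω → ℝ} (hg : Inv X t g) : ∃ C : ℝ, ∀ ω, |g ω| ≤ C := by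
  obtain ⟨G, hG⟩ := hg.factor idx hidx
  obtain ⟨C, hC⟩ := (Set.finite_range fun q : Fin (t + 1) → Fin N => |G q|).bddAbove
  exact ⟨C, fun ω => by rw [hG ω]; exact hC (Set.mem_range_self _)⟩

lemma integrable_of_bounded_meas {P : Measure Ω} [IsProbabilityMeasure P] {g : Ω → ℝ}
    (hm : AEStronglyMeasurable g P) (hb : ∃ C : ℝ, ∀ ω, |g ω| ≤ C) : Integrable g P := by
  obtain ⟨C, hC⟩ := hb
  exact ⟨hm, HasFiniteIntegral.of_bounded (C := C) (ae_of_all _ fun ω => by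
    rw [Real.norm_eq_abs]; exact hC ω)⟩



/-- A total choice of an `Inv` a.e.-version. -/
noncomputable def invVersion (P : Measure Ω) (X : ℕ → Ω → (Fin N → ℝ)) (t : ℕ)
    (v : Ω → ℝ) : Ω → ℝ :=
  if h : ∃ vh : Ω → ℝ, Inv X t vh ∧ vh =ᵐ[P] v then h.choose else fun _ => 0

lemma invVersion_inv (P : Measure Ω) (X : ℕ → Ω → (Fin N → ℝ)) (t : ℕ) (v : Ω → ℝ) :
    Inv X t (invVersion P X t v) := by
  unfold invVersion
  split
  · next h => exact h.choose_spec.1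
  · intro ω ω' _; rfl

lemma invVersion_ae {P : Measure Ω} {X : ℕ → Ω → (Fin N → ℝ)} {t : ℕ} {v : Ω → ℝ}
    (h : ∃ vh : Ω → ℝ, Inv X t vh ∧ vh =ᵐ[P] v) : invVersion P X t v =ᵐ[P] v := by
  rw [invVersion, dif_pos h]
  exact h.choose_spec.2

/-- A total choice of a path-dependent version of the driver. -/
noncomputable def drvVersion (P : Measure Ω) (X : ℕ → Ω → (Fin N → ℝ))
    (f : Ω → ℕ → ℝ → (Fin N → ℝ) → ℝ) (t : ℕ) : Ω → ℝ → (Fin N → ℝ) → ℝ :=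
  if h : ∃ ftil : Ω → ℝ → (Fin N → ℝ) → ℝ, (∀ y z, Inv X t (fun ω => ftil ω y z)) ∧
      ∀ᵐ ω ∂P, ∀ y z, ftil ω y z = f ω t y z then h.choose else fun _ _ _ => 0

lemma drvVersion_inv (P : Measure Ω) (X : ℕ → Ω → (Fin N → ℝ))
    (f : Ω → ℕ → ℝ → (Fin N → ℝ) → ℝ) (t : ℕ) (y : ℝ) (z : Fin N → ℝ) :
    Inv X t (fun ω => drvVersion P X f t ω y z) := by
  unfold drvVersion
  split
  · next h => exact h.choose_spec.1 y z
  · intro ω ω' _; rfl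

lemma drvVersion_ae {P : Measure Ω} {X : ℕ → Ω → (Fin N → ℝ)} {F : Filtration ℕ mΩ}
    (hF : IsCompletedNaturalFiltration P X F) {f : Ω → ℕ → ℝ → (Fin N → ℝ) → ℝ}
    (hfAd : DriverAdapted F f) (t : ℕ) :
    ∀ᵐ ω ∂P, ∀ y z, drvVersion P X f t ω y z = f ω t y z := by
  rw [drvVersion, dif_pos (exists_drv_version hF hfAd t)]
  exact (exists_drv_version hF hfAd t).choose_spec.2

/-- One backward step for the `Z` component. -/
noncomputable def Zstep (X : ℕ → Ω → (Fin N → ℝ)) (g : Ω → ℝ) (t : ℕ) :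
    Ω → Fin N → ℝ := fun ω i =>
  if h : ∃ ω', (∀ s ≤ t, X s ω' = X s ω) ∧ X (t + 1) ω' = e N i then g h.choose else 0

lemma Zstep_inv (X : ℕ → Ω → (Fin N → ℝ)) (g : Ω → ℝ) (t : ℕ) :
    Inv X t (Zstep X g t) := by
  intro ω ω' hpath
  funext i
  unfold Zstep
  have hpp : (fun ω'' => (∀ s ≤ t, X s ω'' = X s ω') ∧ X (t + 1) ω'' = e N i) =
      (fun ω'' => (∀ s ≤ t, X s ω'' = X s ω) ∧ X (t + 1) ω'' = e N i) := by
    funext ω''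
    exact propext (and_congr_left fun _ => forall₂_congr fun s hs => by rw [hpath s hs])
  simp only [hpp]

lemma Zstep_dot {X : ℕ → Ω → (Fin N → ℝ)}
    (idx : ℕ → Ω → Fin N) (hidx : ∀ s ω, X s ω = e N (idx s ω))
    {g : Ω → ℝ} {t : ℕ} (hg : Inv X (t + 1) g) (ω : Ω) :
    dotR (Zstep X g t ω) (X (t + 1) ω) = g ω := by
  rw [hidx (t + 1) ω, dotR_e]
  have h : ∃ ω', (∀ s ≤ t, X s ω' = X s ω) ∧ X (t + 1) ω' = e N (idx (t + 1) ω) :=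
    ⟨ω, fun _ _ => rfl, hidx (t + 1) ω⟩
  rw [Zstep, dif_pos h]
  refine hg ω h.choose fun s hs => ?_
  rcases Nat.lt_succ_iff_lt_or_eq.1 (Nat.lt_succ_of_le hs) with hs' | hs'
  · exact h.choose_spec.1 s (Nat.lt_succ_iff.1 hs')
  · rw [hs', h.choose_spec.2, ← hidx (t + 1) ω]

/-- `V_t(Z) = Σ_i Z_i E[X_{t+1,i} | F_t]`. -/
noncomputable def Vt (P : Measure Ω) (F : Filtration ℕ mΩ) (X : ℕ → Ω → (Fin N → ℝ))
    (t : ℕ) (Z : Ω → Fin N → ℝ) : Ω → ℝ := fun ω =>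
  ∑ i, Z ω i * (P[fun ω' => X (t + 1) ω' i|F t]) ω

/-- The backward construction of the `Y` process; `bsdeY k` is the value at time `T - k`. -/
noncomputable def bsdeY (P : Measure Ω) (F : Filtration ℕ mΩ)
    (X : ℕ → Ω → (Fin N → ℝ)) (f : Ω → ℕ → ℝ → (Fin N → ℝ) → ℝ) (ξ : Ω → ℝ) (T : ℕ) :
    ℕ → Ω → ℝ
  | 0 => invVersion P X T ξ
  | (k + 1) =>
      fun ω => Function.invFun
        (fun y : ℝ => y - drvVersion P X f (T - (k + 1)) ω y
          (Zstep X (bsdeY P F X f ξ T k) (T - (k + 1)) ω))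
        (invVersion P X (T - (k + 1))
          (Vt P F X (T - (k + 1)) (Zstep X (bsdeY P F X f ξ T k) (T - (k + 1)))) ω)

lemma bsdeY_inv (P : Measure Ω) (F : Filtration ℕ mΩ)
    (X : ℕ → Ω → (Fin N → ℝ)) (f : Ω → ℕ → ℝ → (Fin N → ℝ) → ℝ) (ξ : Ω → ℝ) (T : ℕ)
    (k : ℕ) : Inv X (T - k) (bsdeY P F X f ξ T k) := by
  cases k with
  | zero => exact invVersion_inv P X T ξ
  | succ k =>
      intro ω ω' hpath
      show Function.invFun _ _ = Function.invFun _ _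
      have hz := Zstep_inv X (bsdeY P F X f ξ T k) (T - (k + 1)) ω ω' hpath
      have hv := invVersion_inv P X (T - (k + 1))
        (Vt P F X (T - (k + 1)) (Zstep X (bsdeY P F X f ξ T k) (T - (k + 1)))) ω ω' hpath
      rw [hz, hv]
      congr 1
      funext y
      have := drvVersion_inv P X f (T - (k + 1)) y
        (Zstep X (bsdeY P F X f ξ T k) (T - (k + 1)) ω) ω ω' hpath
      simp only at this
      rw [this]



lemma exists_inv_ae_vec {P : Measure Ω} {X : ℕ → Ω → (Fin N → ℝ)} {F : Filtration ℕ mΩ}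
    (hF : IsCompletedNaturalFiltration P X F) {t : ℕ} {Z : Ω → Fin N → ℝ}
    (hZ : StronglyMeasurable[F t] Z) :
    ∃ Zh : Ω → Fin N → ℝ, Inv X t Zh ∧ Zh =ᵐ[P] Z := by
  have hZi : ∀ i : Fin N, StronglyMeasurable[F t] (fun ω => Z ω i) := fun i =>
    ((measurable_pi_apply i).comp hZ.measurable).stronglyMeasurable
  choose v hv1 hv2 using fun i : Fin N => exists_inv_ae hF (hZi i)
  refine ⟨fun ω i => v i ω, fun ω ω' hpath => funext fun i => hv1 i ω ω' hpath, ?_⟩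
  exact (ae_all_iff.2 hv2).mono fun ω h => funext fun i => h i

lemma coord_inv {X : ℕ → Ω → (Fin N → ℝ)} {t : ℕ} {Z : Ω → Fin N → ℝ}
    (hZ : Inv X t Z) (i : Fin N) : Inv X t (fun ω => Z ω i) :=
  fun ω ω' h => by simp only []; rw [hZ ω ω' h]

lemma X_bound {X : ℕ → Ω → (Fin N → ℝ)} (hX : BasisValued X) (s : ℕ) (ω : Ω) (i : Fin N) :
    |X s ω i| ≤ 1 := by
  obtain ⟨j, hj⟩ := hX s ω
  rw [hj]
  simp only [e, Pi.single_apply]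
  split <;> norm_num

lemma X_inv (X : ℕ → Ω → (Fin N → ℝ)) (s : ℕ) : Inv X s (X s) :=
  fun ω ω' h => h s le_rfl

/-- The key orthogonality: `E[wᵀ M_{t+1} | F_t] = 0` for path-dependent `w`. -/
lemma condexp_dotR_Mdiff {P : Measure Ω} [IsProbabilityMeasure P]
    {X : ℕ → Ω → (Fin N → ℝ)} (hX : BasisValued X) {F : Filtration ℕ mΩ}
    (hF : IsCompletedNaturalFiltration P X F)
    (idx : ℕ → Ω → Fin N) (hidx : ∀ s ω, X s ω = e N (idx s ω))
    {t : ℕ} {w : Ω → Fin N → ℝ} (hw : Inv X t w) :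
    P[fun ω => dotR (w ω) (Mdiff P F X t ω)|F t] =ᵐ[P] 0 := by
  have hXsm : ∀ i : Fin N, StronglyMeasurable[F (t + 1)] (fun ω => X (t + 1) ω i) :=
    fun i => Inv.stronglyMeasurable hF idx hidx (coord_inv (X_inv X (t + 1)) i)
  have hXint : ∀ i : Fin N, Integrable (fun ω => X (t + 1) ω i) P := fun i =>
    integrable_of_bounded_meas (((hXsm i).mono (F.le _)).aestronglyMeasurable)
      ⟨1, fun ω => X_bound hX (t + 1) ω i⟩
  have hMint : ∀ i : Fin N, Integrable (fun ω => Mdiff P F X t ω i) P := fun i =>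
    (hXint i).sub integrable_condExp
  have hwsm : ∀ i : Fin N, StronglyMeasurable[F t] (fun ω => w ω i) := fun i =>
    Inv.stronglyMeasurable hF idx hidx (coord_inv hw i)
  have hterm : ∀ i : Fin N, Integrable (fun ω => w ω i * Mdiff P F X t ω i) P := by
    intro i
    obtain ⟨C, hC⟩ := (coord_inv hw i).bounded idx hidx
    exact Integrable.bdd_mul (hMint i) ((hwsm i).mono (F.le t)).aestronglyMeasurable
      (c := C) (ae_of_all _ fun ω => by rw [Real.norm_eq_abs]; exact hC ω)
  have hsum : (fun ω => dotR (w ω) (Mdiff P F X t ω)) =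
      ∑ i : Fin N, (fun ω => w ω i * Mdiff P F X t ω i) := by
    funext ω
    rw [Finset.sum_apply]
    rfl
  rw [hsum]
  refine (condExp_finsetSum (fun i _ => hterm i) _).trans ?_
  have hzero : ∀ i : Fin N,
      P[fun ω => w ω i * Mdiff P F X t ω i|F t] =ᵐ[P] 0 := by
    intro i
    have hMc : P[fun ω => Mdiff P F X t ω i|F t] =ᵐ[P] 0 := by
      have h1 : (fun ω => Mdiff P F X t ω i) =
          (fun ω => X (t + 1) ω i) - P[fun ω' => X (t + 1) ω' i|F t] := rfl
      rw [h1]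
      refine (condExp_sub (hXint i) integrable_condExp _).trans ?_
      rw [condExp_of_stronglyMeasurable (F.le t) stronglyMeasurable_condExp
        integrable_condExp]
      simp
    have hpull : P[(fun ω => w ω i) * (fun ω => Mdiff P F X t ω i)|F t] =ᵐ[P]
        (fun ω => w ω i) * P[fun ω => Mdiff P F X t ω i|F t] :=
      condExp_mul_of_stronglyMeasurable_left (hwsm i) (hterm i) (hMint i)
    refine EventuallyEq.trans ?_ ((hpull.trans ?_))
    · exact EventuallyEq.rfl
    · filter_upwards [hMc] with ω hω
      simp only [Pi.mul_apply, hω, Pi.zero_apply, mul_zero]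
  calc ∑ i : Fin N, P[fun ω => w ω i * Mdiff P F X t ω i|F t]
      =ᵐ[P] ∑ _i : Fin N, (0 : Ω → ℝ) := by
        refine eventuallyEq_sum fun i _ => hzero i
    _ = 0 := by simp


/-- **Finite horizon existence and uniqueness** for discrete-time BSDEs. -/
theorem finite_horizon_exists_unique
    {Ω : Type*} {mΩ : MeasurableSpace Ω} {N : ℕ}
    (P : Measure Ω) [IsProbabilityMeasure P] (F : Filtration ℕ mΩ)
    (X : ℕ → Ω → (Fin N → ℝ)) (hX : BasisValued X)
    (hF : IsCompletedNaturalFiltration P X F)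
    (T : ℕ) (hT : 0 < T) (ξ : Ω → ℝ) (hξ : StronglyMeasurable[F T] ξ)
    (f : Ω → ℕ → ℝ → (Fin N → ℝ) → ℝ) (hfAd : DriverAdapted F f)
    (hf1 : ∀ (Y : ℕ → Ω → ℝ) (Z Z' : ℕ → Ω → Fin N → ℝ), Adapted F Y → Adapted F Z →
      Adapted F Z' → equivM P F X Z Z' →
      ∀ t : ℕ, ∀ᵐ ω ∂P, f ω t (Y t ω) (Z t ω) = f ω t (Y t ω) (Z' t ω))
    (hf2 : ∀ (z : Fin N → ℝ) (t : ℕ), t < T →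
      ∀ᵐ ω ∂P, Function.Bijective fun y : ℝ => y - f ω t y z) :

    ∃ (Y : ℕ → Ω → ℝ) (Z : ℕ → Ω → Fin N → ℝ), SolvesFiniteBSDE P F X f T ξ Y Z ∧
      ∀ (Y' : ℕ → Ω → ℝ) (Z' : ℕ → Ω → Fin N → ℝ), SolvesFiniteBSDE P F X f T ξ Y' Z' →
        (∀ t ≤ T, Y t =ᵐ[P] Y' t) ∧ ∀ t < T, equivMt P F X t (Z t) (Z' t) := by
  classical
  choose idx hidx using hX
  set Y : ℕ → Ω → ℝ := fun t => bsdeY P F X f ξ T (T - t) with hYdef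
  set Z : ℕ → Ω → Fin N → ℝ := fun t => Zstep X (bsdeY P F X f ξ T (T - (t + 1))) t
    with hZdef
  have hYinv : ∀ t, Inv X t (Y t) := fun t =>
    (bsdeY_inv P F X f ξ T (T - t)).mono (by omega)
  have hZinv : ∀ t, Inv X t (Z t) := fun t => Zstep_inv X _ t
  have hYad : Adapted F Y := fun t => ((hYinv t).stronglyMeasurable hF idx hidx).measurable
  have hZad : Adapted F Z := fun t => ((hZinv t).stronglyMeasurable hF idx hidx).measurable
  -- strong measurability of Vt
  have hVsm : ∀ t, StronglyMeasurable[F t] (Vt P F X t (Z t)) := by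
    intro t
    refine Measurable.stronglyMeasurable ?_
    refine Finset.measurable_sum _ fun i _ => Measurable.mul ?_ ?_
    · exact ((measurable_pi_apply i).comp (hZad t))
    · exact stronglyMeasurable_condExp.measurable
  -- the explicit formula for Y t when t < T
  have hform : ∀ t, t < T → Y t = fun ω => Function.invFun
      (fun y : ℝ => y - drvVersion P X f t ω y (Z t ω))
      (invVersion P X t (Vt P F X t (Z t)) ω) := by
    intro t ht
    have hk : T - t = (T - (t + 1)) + 1 := by omega
    have htk : T - (T - (t + 1) + 1) = t := by omega
    show bsdeY P F X f ξ T (T - t) = _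
    rw [hk]
    simp only [bsdeY]
    rw [htk]
  -- one-step equation
  have hstep : ∀ t, t < T → ∀ᵐ ω ∂P,
      Y t ω - f ω t (Y t ω) (Z t ω) + dotR (Z t ω) (Mdiff P F X t ω) = Y (t + 1) ω := by
    intro t ht
    obtain ⟨GZ, hGZ⟩ := (hZinv t).factor idx hidx
    have hVae : invVersion P X t (Vt P F X t (Z t)) =ᵐ[P] Vt P F X t (Z t) :=
      invVersion_ae (exists_inv_ae hF (hVsm t))
    have hdrv := drvVersion_ae hF hfAd t
    have hbij : ∀ᵐ ω ∂P, ∀ q : Fin (t + 1) → Fin N,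
        Function.Bijective (fun y : ℝ => y - f ω t y (GZ q)) :=
      ae_all_iff.2 fun q => hf2 (GZ q) t ht
    have hZdot : ∀ ω, dotR (Z t ω) (X (t + 1) ω) = Y (t + 1) ω := by
      intro ω
      exact Zstep_dot idx hidx ((bsdeY_inv P F X f ξ T (T - (t + 1))).mono (by omega)) ω
    filter_upwards [hVae, hdrv, hbij] with ω hV hd hb
    have hbij' : Function.Bijective
        (fun y : ℝ => y - drvVersion P X f t ω y (Z t ω)) := by
      have heqfun : (fun y : ℝ => y - drvVersion P X f t ω y (Z t ω)) =
          fun y : ℝ => y - f ω t y (Z t ω) := funext fun y => by rw [hd y (Z t ω)]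
      rw [heqfun, hGZ ω]
      exact hb _
    have hsolve : Y t ω - drvVersion P X f t ω (Y t ω) (Z t ω) =
        invVersion P X t (Vt P F X t (Z t)) ω := by
      conv_lhs => rw [hform t ht]
      exact Function.invFun_eq
        (hbij'.surjective (invVersion P X t (Vt P F X t (Z t)) ω))
    have halg : dotR (Z t ω) (Mdiff P F X t ω) = Y (t + 1) ω - Vt P F X t (Z t) ω := by
      rw [← hZdot ω]
      simp [dotR, Mdiff, Vt, mul_sub, Finset.sum_sub_distrib]
    rw [halg, ← hd (Y t ω) (Z t ω)]
    rw [hV] at hsolve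
    linarith
  -- terminal value
  have hYT : Y T =ᵐ[P] ξ := by
    have hT0 : Y T = invVersion P X T ξ := by
      show bsdeY P F X f ξ T (T - T) = _
      rw [Nat.sub_self]
      rfl
    rw [hT0]
    exact invVersion_ae (exists_inv_ae hF hξ)
  -- telescoped equation
  have hsol : ∀ t ≤ T, ∀ᵐ ω ∂P,
      Y t ω - ∑ u ∈ Finset.Ico t T, f ω u (Y u ω) (Z u ω) +
        ∑ u ∈ Finset.Ico t T, dotR (Z u ω) (Mdiff P F X u ω) = ξ ω := by
    have main : ∀ d t, T = t + d → ∀ᵐ ω ∂P,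
        Y t ω - ∑ u ∈ Finset.Ico t T, f ω u (Y u ω) (Z u ω) +
          ∑ u ∈ Finset.Ico t T, dotR (Z u ω) (Mdiff P F X u ω) = ξ ω := by
      intro d
      induction d with
      | zero =>
          intro t htT
          have ht : t = T := by omega
          subst ht
          filter_upwards [hYT] with ω hω
          simp [Finset.Ico_self, hω]
      | succ d ih =>
          intro t htT
          have ht : t < T := by omega
          filter_upwards [ih (t + 1) (by omega), hstep t ht] with ω h1 h2
          rw [Finset.sum_eq_sum_Ico_succ_bot ht, Finset.sum_eq_sum_Ico_succ_bot ht]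
          linarith
    intro t htT
    exact main (T - t) t (by omega)
  refine ⟨Y, Z, ⟨hYad, hZad, hsol⟩, ?_⟩
  -- uniqueness
  intro Y' Z' hs
  obtain ⟨hY'ad, hZ'ad, hsol'⟩ := hs
  have hY'T : Y' T =ᵐ[P] ξ := by
    filter_upwards [hsol' T le_rfl] with ω hω
    simpa [Finset.Ico_self] using hω
  -- one-step equation for the other solution
  have hstep' : ∀ t, t < T → ∀ᵐ ω ∂P,
      Y' t ω - f ω t (Y' t ω) (Z' t ω) + dotR (Z' t ω) (Mdiff P F X t ω) =
        Y' (t + 1) ω := by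
    intro t ht
    filter_upwards [hsol' t ht.le, hsol' (t + 1) ht] with ω h1 h2
    rw [Finset.sum_eq_sum_Ico_succ_bot ht, Finset.sum_eq_sum_Ico_succ_bot ht] at h1
    linarith
  -- the main uniqueness step
  have mainstep : ∀ t, t < T → Y (t + 1) =ᵐ[P] Y' (t + 1) →
      equivMt P F X t (Z t) (Z' t) ∧ Y t =ᵐ[P] Y' t := by
    intro t ht hind
    obtain ⟨yh, hyh1, hyh2⟩ := exists_inv_ae hF (hY'ad t).stronglyMeasurable
    obtain ⟨zh, hzh1, hzh2⟩ := exists_inv_ae_vec hF (hZ'ad t).stronglyMeasurable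
    have hdrv := drvVersion_ae hF hfAd t
    -- the F_t-measurable difference
    set D : Ω → ℝ := fun ω => (Y t ω - drvVersion P X f t ω (Y t ω) (Z t ω)) -
      (yh ω - drvVersion P X f t ω (yh ω) (zh ω)) with hDdef
    have hDinv : Inv X t D := by
      intro ω ω' hpath
      have h1 := hYinv t ω ω' hpath
      have h2 := hZinv t ω ω' hpath
      have h3 := hyh1 ω ω' hpath
      have h4 := hzh1 ω ω' hpath
      have h5 := drvVersion_inv P X f t (Y t ω) (Z t ω) ω ω' hpath
      have h6 := drvVersion_inv P X f t (yh ω) (zh ω) ω ω' hpath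
      simp only at h5 h6
      simp only [hDdef, h1, h2, h3, h4, h5, h6]
    set w : Ω → Fin N → ℝ := fun ω => zh ω - Z t ω with hwdef
    have hwinv : Inv X t w := by
      intro ω ω' hpath
      simp only [hwdef, hzh1 ω ω' hpath, hZinv t ω ω' hpath]
    -- a.e. identity  D = wᵀM
    have hDM : D =ᵐ[P] fun ω => dotR (w ω) (Mdiff P F X t ω) := by
      filter_upwards [hstep t ht, hstep' t ht, hind, hdrv, hyh2, hzh2]
        with ω h1 h2 h3 h4 h5 h6
      have d1 : drvVersion P X f t ω (Y t ω) (Z t ω) = f ω t (Y t ω) (Z t ω) := h4 _ _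
      have d2 : drvVersion P X f t ω (yh ω) (zh ω) = f ω t (Y' t ω) (Z' t ω) := by
        rw [h4 _ _, h5, h6]
      have e3 : dotR (w ω) (Mdiff P F X t ω) =
          dotR (Z' t ω) (Mdiff P F X t ω) - dotR (Z t ω) (Mdiff P F X t ω) := by
        simp [hwdef, dotR, h6, sub_mul, Finset.sum_sub_distrib]
      rw [hDdef]
      simp only
      rw [d1, d2, h5, e3]
      linarith
    -- conditional expectation argument
    have hDce : P[D|F t] = D :=
      condExp_of_stronglyMeasurable (F.le t)
        (hDinv.stronglyMeasurable hF idx hidx)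
        (integrable_of_bounded_meas
          (((hDinv.stronglyMeasurable hF idx hidx).mono (F.le t)).aestronglyMeasurable)
          (hDinv.bounded idx hidx))
    have hD0 : D =ᵐ[P] 0 := by
      calc D = P[D|F t] := hDce.symm
        _ =ᵐ[P] P[fun ω => dotR (w ω) (Mdiff P F X t ω)|F t] := condExp_congr_ae hDM
        _ =ᵐ[P] 0 := condexp_dotR_Mdiff (fun s ω => ⟨idx s ω, hidx s ω⟩) hF idx hidx hwinv
    have hwM0 : ∀ᵐ ω ∂P, dotR (w ω) (Mdiff P F X t ω) = 0 := by
      filter_upwards [hDM, hD0] with ω h1 h2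
      rw [← h1, h2]
      rfl
    -- equivalence of Z and Z'
    have hZeq : equivMt P F X t (Z t) (Z' t) := by
      have hint : (fun ω => (dotR (Z t ω - Z' t ω) (Mdiff P F X t ω)) ^ 2) =ᵐ[P]
          (0 : Ω → ℝ) := by
        filter_upwards [hwM0, hzh2] with ω h1 h2
        have : dotR (Z t ω - Z' t ω) (Mdiff P F X t ω) =
            - dotR (w ω) (Mdiff P F X t ω) := by
          simp [hwdef, dotR, h2, sub_mul, Finset.sum_sub_distrib]
        simp [this, h1]
      refine (condExp_congr_ae hint).trans ?_
      rw [condExp_zero]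
    refine ⟨hZeq, ?_⟩
    -- identify the drivers via hf1
    have hf1app : ∀ᵐ ω ∂P, f ω t (Y' t ω) (Z' t ω) = f ω t (Y' t ω) (Z t ω) := by
      have hZpad : Adapted F (fun s => if s = t then Z' t else Z s) := by
        intro s
        by_cases hst : s = t
        · rw [hst]; simpa using hZ'ad t
        · simpa [hst] using hZad s
      have hequiv : equivM P F X (fun s => if s = t then Z' t else Z s) Z := by
        intro s
        by_cases hst : s = t
        · subst hst
          simp only [if_pos rfl]
          -- equivMt s (Z' s) (Z s) : symmetric version of hZeq
          have hint : (fun ω => (dotR (Z' s ω - Z s ω) (Mdiff P F X s ω)) ^ 2) =ᵐ[P]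
              (0 : Ω → ℝ) := by
            filter_upwards [hwM0, hzh2] with ω h1 h2
            have : dotR (Z' s ω - Z s ω) (Mdiff P F X s ω) =
                dotR (w ω) (Mdiff P F X s ω) := by
              simp [hwdef, dotR, h2, sub_mul, Finset.sum_sub_distrib]
            simp [this, h1]
          refine (condExp_congr_ae hint).trans ?_
          rw [condExp_zero]
        · simp only [if_neg hst]
          have hint : (fun ω => (dotR (Z s ω - Z s ω) (Mdiff P F X s ω)) ^ 2) =ᵐ[P]
              (0 : Ω → ℝ) := by
            refine ae_of_all _ fun ω => ?_
            simp [dotR, sub_self]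
          refine (condExp_congr_ae hint).trans ?_
          rw [condExp_zero]
      have := hf1 Y' (fun s => if s = t then Z' t else Z s) Z hY'ad hZpad hZad hequiv t
      filter_upwards [this] with ω hω
      simpa using hω
    -- conclude Y t = Y' t via injectivity
    obtain ⟨GZ, hGZ⟩ := (hZinv t).factor idx hidx
    have hbij : ∀ᵐ ω ∂P, ∀ q : Fin (t + 1) → Fin N,
        Function.Bijective (fun y : ℝ => y - f ω t y (GZ q)) :=
      ae_all_iff.2 fun q => hf2 (GZ q) t ht
    filter_upwards [hD0, hdrv, hyh2, hzh2, hf1app, hbij] with ω h0 h4 h5 h6 h7 h8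
    have key : Y t ω - f ω t (Y t ω) (Z t ω) = Y' t ω - f ω t (Y' t ω) (Z t ω) := by
      have hD : D ω = 0 := h0
      rw [hDdef] at hD
      simp only at hD
      have e1 : drvVersion P X f t ω (Y t ω) (Z t ω) = f ω t (Y t ω) (Z t ω) := h4 _ _
      have e2 : drvVersion P X f t ω (yh ω) (zh ω) = f ω t (Y' t ω) (Z' t ω) := by
        rw [h4 _ _, h5, h6]
      rw [e1, e2] at hD
      rw [← h7]
      linarith
    have hinj : Function.Injective (fun y : ℝ => y - f ω t y (Z t ω)) := by
      rw [hGZ ω]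
      exact (h8 _).injective
    exact hinj key
  -- downward induction for Y
  have keyY : ∀ d t, T = t + d → Y t =ᵐ[P] Y' t := by
    intro d
    induction d with
    | zero =>
        intro t htT
        have ht : t = T := by omega
        subst ht
        exact hYT.trans hY'T.symm
    | succ d ih =>
        intro t htT
        exact (mainstep t (by omega) (ih (t + 1) (by omega))).2
  refine ⟨fun t htT => keyY (T - t) t (by omega), fun t ht => ?_⟩
  exact (mainstep t ht (keyY (T - (t + 1)) (t + 1) (by omega))).1

end DiscreteEBSDE
end
end
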